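/- Let R be a commutative ring and λ : R → S an injective ring epimorphism. If there exist sets X, Y and R-module epimorphisms S^{(X)} → D and D^{(Y)} → S for some R-module D, then the resulting epimorphism S^{(X×Y)} → S splits as a map of R-modules; consequently if D has projective dimension ≤ 1 then pd_R S ≤ 1. -/

import Mathlib

universe u

open Function LinearMap TensorProduct

section helpers

variable {R : Type u} [CommRing R]

/-- Transfer projectivity along a linear equivalence (wrapper). -/
theorem projOfEquiv {M N : Type u} [AddCommGroup M] [AddCommGroup N]
    [Module R M] [Module R N] (e : M ≃ₗ[R] N) (h : Module.Projective R M) :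
    Module.Projective R N := by
  haveI := h
  exact Module.Projective.of_equiv e

/-- Schanuel-type lemma: transfer projectivity of kernels between two
projective resolutions of the same module. -/
theorem schanuel {A₁ A₂ N : Type u} [AddCommGroup A₁] [AddCommGroup A₂]
    [AddCommGroup N] [Module R A₁] [Module R A₂] [Module R N]
    [Module.Projective R A₁] [Module.Projective R A₂]
    (g₁ : A₁ →ₗ[R] N) (g₂ : A₂ →ₗ[R] N)
    (h₁ : Surjective g₁) (h₂ : Surjective g₂)
    (hk₁ : Module.Projective R ↥(ker g₁)) :
    Module.Projective R ↥(ker g₂) := by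
  classical
  set c : A₁ × A₂ →ₗ[R] N := g₁ ∘ₗ LinearMap.fst R A₁ A₂ - g₂ ∘ₗ LinearMap.snd R A₁ A₂ with hc
  have memZ : ∀ z : A₁ × A₂, z ∈ ker c ↔ g₁ z.1 = g₂ z.2 := by
    intro z
    simp [hc, LinearMap.mem_ker, sub_eq_zero]
  -- the projection to A₂
  let h : ↥(ker c) →ₗ[R] A₂ := (LinearMap.snd R A₁ A₂) ∘ₗ (ker c).subtype
  have hh : Surjective h := by
    intro a
    obtain ⟨x, hx⟩ := h₁ (g₂ a)
    exact ⟨⟨(x, a), (memZ _).2 hx⟩, rfl⟩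
  -- ker h ≃ ker g₁
  let e₁ : ↥(ker h) ≃ₗ[R] ↥(ker g₁) :=
    { toFun := fun z => ⟨(z.1 : A₁ × A₂).1, by
        have hz2 : (z.1 : A₁ × A₂).2 = 0 := z.2
        have := (memZ _).1 z.1.2
        rw [hz2, map_zero] at this
        exact this⟩
      invFun := fun a => ⟨⟨⟨(a : A₁), 0⟩, (memZ _).2 (by simp [a.2])⟩, rfl⟩
      map_add' := fun x y => rfl
      map_smul' := fun r x => rfl
      left_inv := fun z => by
        have hz2 : (z.1 : A₁ × A₂).2 = 0 := z.2
        apply Subtype.ext; apply Subtype.ext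
        exact Prod.ext rfl hz2.symm
      right_inv := fun a => rfl }
  -- split h using projectivity of A₂, to see ker c is projective
  obtain ⟨s, hs⟩ := Module.projective_lifting_property h LinearMap.id hh
  have hsid : ∀ a, h (s a) = a := fun a => LinearMap.congr_fun hs a
  -- ker c ≃ ker h × A₂
  let pr : ↥(ker c) →ₗ[R] ↥(ker h) :=
    LinearMap.codRestrict (ker h) (LinearMap.id - s ∘ₗ h)
      (fun z => by simp [LinearMap.mem_ker, hsid])
  let f : ↥(ker c) →ₗ[R] ↥(ker h) × A₂ := pr.prod h
  let g' : ↥(ker h) × A₂ →ₗ[R] ↥(ker c) :=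
    (ker h).subtype ∘ₗ LinearMap.fst R ↥(ker h) A₂ + s ∘ₗ LinearMap.snd R ↥(ker h) A₂
  have pf1 : f ∘ₗ g' = LinearMap.id := by
    apply LinearMap.ext; rintro ⟨k, a⟩
    have hk : h ((ker h).subtype k) = 0 := k.2
    have : f (g' (k, a)) = (k, a) := by
      apply Prod.ext
      · apply Subtype.ext
        simp [f, g', pr, map_add, hk, hsid]
      · simp [f, g', pr, map_add, hk, hsid]
    simpa using this
  have pf2 : g' ∘ₗ f = LinearMap.id := by
    apply LinearMap.ext; intro z
    have : g' (f z) = z := by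
      apply Subtype.ext
      simp [f, g', pr]
    simpa using this
  let e₂ : (↥(ker h) × A₂) ≃ₗ[R] ↥(ker c) := LinearEquiv.ofLinear g' f pf2 pf1
  haveI := hk₁
  haveI : Module.Projective R ↥(ker h) := Module.Projective.of_equiv e₁.symm
  haveI hZ : Module.Projective R ↥(ker c) := Module.Projective.of_equiv e₂
  -- the projection to A₁
  let k : ↥(ker c) →ₗ[R] A₁ := (LinearMap.fst R A₁ A₂) ∘ₗ (ker c).subtype
  have hk : Surjective k := by
    intro a
    obtain ⟨x, hx⟩ := h₂ (g₁ a)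
    exact ⟨⟨(a, x), (memZ _).2 hx.symm⟩, rfl⟩
  -- split k using projectivity of A₁: ker k is a direct summand of ker c
  obtain ⟨s', hs'⟩ := Module.projective_lifting_property k LinearMap.id hk
  have hs'id : ∀ a, k (s' a) = a := fun a => LinearMap.congr_fun hs' a
  let ι : ↥(ker k) →ₗ[R] ↥(ker c) := (ker k).subtype
  let ρ : ↥(ker c) →ₗ[R] ↥(ker k) :=
    LinearMap.codRestrict (ker k) (LinearMap.id - s' ∘ₗ k)
      (fun z => by simp [LinearMap.mem_ker, map_sub, hs'id])
  have hρι : ρ.comp ι = LinearMap.id := by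
    apply LinearMap.ext; intro z
    apply Subtype.ext
    have hz : k (ι z) = 0 := z.2
    simp [ρ, ι, hz]
  haveI : Module.Projective R ↥(ker k) := Module.Projective.of_split ι ρ hρι
  -- ker k ≃ ker g₂
  let e₃ : ↥(ker k) ≃ₗ[R] ↥(ker g₂) :=
    { toFun := fun z => ⟨(z.1 : A₁ × A₂).2, by
        have hz1 : (z.1 : A₁ × A₂).1 = 0 := z.2
        have := (memZ _).1 z.1.2
        rw [hz1, map_zero] at this
        exact this.symm⟩
      invFun := fun a => ⟨⟨⟨0, (a : A₂)⟩, (memZ _).2 (by simp [a.2])⟩, rfl⟩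
      map_add' := fun x y => rfl
      map_smul' := fun r x => rfl
      left_inv := fun z => by
        have hz1 : (z.1 : A₁ × A₂).1 = 0 := z.2
        apply Subtype.ext; apply Subtype.ext
        exact Prod.ext hz1.symm rfl
      right_inv := fun a => rfl }
  exact Module.Projective.of_equiv e₃

/-- If `P` is projective then so is `Y →₀ P`. -/
theorem projFinsupp (Y P : Type u) [AddCommGroup P] [Module R P]
    (hP : Module.Projective R P) : Module.Projective R (Y →₀ P) := by
  classical
  haveI := hP
  exact Module.Projective.of_equiv (finsuppLequivDFinsupp (M := P) (ι := Y) R).symm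

end helpers

section epi

variable {R S : Type u} [CommRing R] [CommRing S] [Algebra R S]

/-- `R`-linear maps between `S`-modules are `S`-linear when `R → S` is an epi. -/
theorem smul_map_of_epi (key : ∀ s : S, (s ⊗ₜ[R] (1 : S) : S ⊗[R] S) = 1 ⊗ₜ[R] s)
    {M N : Type u} [AddCommGroup M] [AddCommGroup N]
    [Module R M] [Module S M] [IsScalarTower R S M]
    [Module R N] [Module S N] [IsScalarTower R S N]
    (f : M →ₗ[R] N) (s : S) (m : M) : f (s • m) = s • f m := by
  let B : S →ₗ[R] S →ₗ[R] N := LinearMap.mk₂ R (fun a b => a • f (b • m))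
    (fun a a' b => by rw [add_smul])
    (fun r a b => by rw [smul_assoc])
    (fun a b b' => by rw [add_smul, map_add, smul_add])
    (fun r a b => by rw [smul_assoc, map_smul, smul_comm])
  have hB := congrArg (TensorProduct.lift B) (key s)
  simpa [B, one_smul] using hB.symm
end epi

/-- `ProjDimLE1 R M` : `M` has projective dimension at most `1`, i.e. `M` is a
quotient of a free module by a projective submodule. -/
def ProjDimLE1 (R : Type u) [Ring R] (M : Type u) [AddCommGroup M]
    [Module R M] : Prop :=
  ∃ (κ : Type u) (K : Submodule R (κ →₀ R)),
    Module.Projective R ↥K ∧ Nonempty (((κ →₀ R) ⧸ K) ≃ₗ[R] M)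

/-- Let `R` be a commutative ring and `λ : R → S` an injective
ring epimorphism.  If there are sets `X`, `Y`, an `R`-module `D`, and
`R`-module epimorphisms `S^{(X)} → D` and `D^{(Y)} → S`, then the resulting
epimorphism `S^{(X×Y)} → S` (realized on `Y →₀ (X →₀ S) ≅ S^{(X×Y)}`) splits
as a map of `R`-modules; consequently, if `D` has projective dimension at
most `1`, then `pd_R S ≤ 1`. -/
theorem split_epi_from_sums_and_pd (R : Type u) [CommRing R]
    (S : Type u) [CommRing S] [Algebra R S]
    (hepi : ∀ (T : Type u) [CommRing T] (g h : S →+* T),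
      g.comp (algebraMap R S) = h.comp (algebraMap R S) → g = h)
    (hinj : Function.Injective (algebraMap R S))
    (X Y : Type u) (D : Type u) [AddCommGroup D] [Module R D]
    (φ : (X →₀ S) →ₗ[R] D) (hφ : Function.Surjective φ)
    (ψ : (Y →₀ D) →ₗ[R] S) (hψ : Function.Surjective ψ) :
    (∃ σ : S →ₗ[R] (Y →₀ (X →₀ S)),
      (ψ ∘ₗ Finsupp.mapRange.linearMap φ) ∘ₗ σ = LinearMap.id) ∧
    (ProjDimLE1 R D → ProjDimLE1 R S) := by
  classical
  -- step 1 : `s ⊗ 1 = 1 ⊗ s` in `S ⊗[R] S`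
  have key : ∀ s : S, (s ⊗ₜ[R] (1 : S) : S ⊗[R] S) = 1 ⊗ₜ[R] s := by
    intro s
    have h := hepi (S ⊗[R] S) Algebra.TensorProduct.includeLeftRingHom
      (Algebra.TensorProduct.includeRight (R := R) (A := S) (B := S)).toRingHom ?_
    · exact RingHom.congr_fun h s
    · apply RingHom.ext; intro r
      show (algebraMap R S r) ⊗ₜ[R] (1 : S) = 1 ⊗ₜ[R] (algebraMap R S r)
      calc (algebraMap R S r) ⊗ₜ[R] (1 : S) = (r • (1 : S)) ⊗ₜ[R] (1 : S) := by
            rw [Algebra.smul_def, mul_one]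
        _ = (1 : S) ⊗ₜ[R] (r • (1 : S)) := TensorProduct.smul_tmul r 1 1
        _ = 1 ⊗ₜ[R] (algebraMap R S r) := by rw [Algebra.smul_def, mul_one]
  -- step 2 : the splitting of `π`
  set π : (Y →₀ (X →₀ S)) →ₗ[R] S := ψ ∘ₗ Finsupp.mapRange.linearMap φ with hπdef
  have hmr : Surjective ⇑(Finsupp.mapRange.linearMap (α := Y) φ) :=
    Finsupp.mapRange_surjective ⇑φ (map_zero φ) hφ
  have hπ : Surjective ⇑π := hψ.comp hmr
  obtain ⟨z, hz⟩ := hπ 1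
  let σ : S →ₗ[R] (Y →₀ (X →₀ S)) :=
    (LinearMap.toSpanSingleton S (Y →₀ (X →₀ S)) z).restrictScalars R
  have hsplit : π ∘ₗ σ = LinearMap.id := by
    apply LinearMap.ext; intro s
    have h1 : π (s • z) = s • π z := smul_map_of_epi key π s z
    simp only [LinearMap.comp_apply, LinearMap.id_apply]
    show π (s • z) = s
    rw [h1, hz, smul_eq_mul, mul_one]
  refine ⟨⟨σ, hsplit⟩, ?_⟩
  -- step 3 : projective dimension
  rintro ⟨κ, K, hK, ⟨e⟩⟩
  -- presentation of D with projective kernel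
  let g : (κ →₀ R) →ₗ[R] D := (e : _ →ₗ[R] D) ∘ₗ K.mkQ
  have hgsurj : Surjective ⇑g := e.surjective.comp (Submodule.mkQ_surjective K)
  have hgker : LinearMap.ker g = K := by
    rw [LinearMap.ker_comp, LinearEquiv.ker]
    simpa using Submodule.ker_mkQ K
  have hKg : Module.Projective R ↥(LinearMap.ker g) := hgker ▸ hK
  -- presentation of `Y →₀ D` with projective kernel
  let mr : (Y →₀ (κ →₀ R)) →ₗ[R] (Y →₀ D) := Finsupp.mapRange.linearMap g
  let ε : (Y × κ →₀ R) ≃ₗ[R] (Y →₀ (κ →₀ R)) := Finsupp.finsuppProdLEquiv R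
  let G : (Y × κ →₀ R) →ₗ[R] (Y →₀ D) := mr ∘ₗ ε.toLinearMap
  have hmrsurj : Surjective ⇑mr := Finsupp.mapRange_surjective ⇑g (map_zero g) hgsurj
  have hGsurj : Surjective ⇑G := hmrsurj.comp ε.surjective
  -- the kernel of `mr` is `Y →₀ ker g`, hence projective
  let m : (Y →₀ ↥(LinearMap.ker g)) →ₗ[R] (Y →₀ (κ →₀ R)) :=
    Finsupp.mapRange.linearMap (LinearMap.ker g).subtype
  have hmmem : ∀ u, m u ∈ LinearMap.ker mr := by
    intro u
    rw [LinearMap.mem_ker]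
    ext y
    simp only [mr, m, Finsupp.mapRange.linearMap_apply, Finsupp.mapRange_apply,
      Finsupp.coe_zero, Pi.zero_apply]
    exact (u y).2
  let m' : (Y →₀ ↥(LinearMap.ker g)) →ₗ[R] ↥(LinearMap.ker mr) :=
    LinearMap.codRestrict _ m hmmem
  have hm'inj : Injective ⇑m' := by
    intro u v huv
    have : m u = m v := congrArg Subtype.val huv
    exact Finsupp.mapRange_injective _ rfl Subtype.val_injective this
  have hm'surj : Surjective ⇑m' := by
    rintro ⟨v, hv⟩
    have hvy : ∀ y, g (v y) = 0 := by
      intro y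
      have := DFunLike.congr_fun (LinearMap.mem_ker.1 hv) y
      simpa [mr, Finsupp.mapRange_apply] using this
    refine ⟨Finsupp.onFinset v.support (fun y => ⟨v y, hvy y⟩) (fun y hy0 => ?_), ?_⟩
    · exact Finsupp.mem_support_iff.2 (fun h0 => hy0 (Subtype.ext h0))
    · apply Subtype.ext
      ext y
      simp [m', m, Finsupp.mapRange_apply, Finsupp.onFinset_apply]
  haveI hfk : Module.Projective R (Y →₀ ↥(LinearMap.ker g)) := projFinsupp Y ↥(LinearMap.ker g) hKg
  have hkmr : Module.Projective R ↥(LinearMap.ker mr) :=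
    Module.Projective.of_equiv (LinearEquiv.ofBijective m' ⟨hm'inj, hm'surj⟩)
  have hGcomap : LinearMap.ker G = (LinearMap.ker mr).comap (ε : (Y × κ →₀ R) →ₗ[R] _) :=
    LinearMap.ker_comp _ _
  have hkG : Module.Projective R ↥(LinearMap.ker G) := by
    haveI := hkmr
    exact Module.Projective.of_equiv
      ((LinearEquiv.ofEq _ _ hGcomap).trans
        (LinearEquiv.ofSubmodule' ε (LinearMap.ker mr))).symm
  -- `S` is a direct summand of `Y →₀ D`
  let i : S →ₗ[R] (Y →₀ D) := Finsupp.mapRange.linearMap φ ∘ₗ σ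
  have hpi : ∀ s, ψ (i s) = s := fun s => LinearMap.congr_fun hsplit s
  -- free covers of `S` and of `ker ψ`
  let q : (S →₀ R) →ₗ[R] S := Finsupp.linearCombination R id
  have hq : Surjective ⇑q := Finsupp.linearCombination_id_surjective R S
  let q' : (↥(LinearMap.ker ψ) →₀ R) →ₗ[R] ↥(LinearMap.ker ψ) := Finsupp.linearCombination R id
  have hq' : Surjective ⇑q' := Finsupp.linearCombination_id_surjective R _
  let cmap : ((S →₀ R) × (↥(LinearMap.ker ψ) →₀ R)) →ₗ[R] (Y →₀ D) :=
    i ∘ₗ q ∘ₗ LinearMap.fst R _ _ + (LinearMap.ker ψ).subtype ∘ₗ q' ∘ₗ LinearMap.snd R _ _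
  have hcsurj : Surjective ⇑cmap := by
    intro n
    have hker : n - i (ψ n) ∈ LinearMap.ker ψ := by
      rw [LinearMap.mem_ker, map_sub, hpi, sub_self]
    obtain ⟨a, ha⟩ := hq (ψ n)
    obtain ⟨b, hb⟩ := hq' ⟨n - i (ψ n), hker⟩
    refine ⟨(a, b), ?_⟩
    simp only [cmap, LinearMap.add_apply, LinearMap.comp_apply, LinearMap.fst_apply,
      LinearMap.snd_apply, ha, hb, Submodule.coe_subtype]
    abel_nf
  have hkc : Module.Projective R ↥(LinearMap.ker cmap) :=
    schanuel G cmap hGsurj hcsurj hkG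
  -- `ker q` is a direct summand of `ker cmap`, hence projective
  let j : ↥(LinearMap.ker q) →ₗ[R] ↥(LinearMap.ker cmap) :=
    LinearMap.codRestrict _ ((LinearMap.inl R (S →₀ R) (↥(LinearMap.ker ψ) →₀ R)) ∘ₗ
      (LinearMap.ker q).subtype) (fun y => by
        have hy : q (y : S →₀ R) = 0 := y.2
        simp [cmap, LinearMap.mem_ker, hy])
  let rr : ↥(LinearMap.ker cmap) →ₗ[R] ↥(LinearMap.ker q) :=
    LinearMap.codRestrict _ ((LinearMap.fst R (S →₀ R) (↥(LinearMap.ker ψ) →₀ R)) ∘ₗ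
      (LinearMap.ker cmap).subtype) (fun z => by
        have hz : cmap (z : (S →₀ R) × _) = 0 := z.2
        have h2 : ψ (cmap (z : (S →₀ R) × _)) = 0 := by rw [hz, map_zero]
        simp only [cmap, LinearMap.add_apply, LinearMap.comp_apply, LinearMap.fst_apply,
          LinearMap.snd_apply, map_add, hpi, Submodule.coe_subtype] at h2
        rw [LinearMap.mem_ker]
        simpa [(q' _).2] using h2)
  have hjr : rr.comp j = LinearMap.id := by
    apply LinearMap.ext; intro y
    apply Subtype.ext
    simp [rr, j]
    rfl
  haveI := hkc
  have hkq : Module.Projective R ↥(LinearMap.ker q) := Module.Projective.of_split j rr hjr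
  exact ⟨S, LinearMap.ker q, hkq, ⟨q.quotKerEquivOfSurjective hq⟩⟩
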